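/- Let f be a nondegenerate form of degree d in n variables over k. Then the center Z(f) is closed under matrix multiplication and is commutative: for all X, Y ∈ Z(f), the product X·Y lies in Z(f) and X·Y = Y·X. In particular Z(f) is a commutative unital k-subalgebra of the n×n matrix algebra over k. -/
import Mathlib

open MvPolynomial Matrix

/-- The Hessian matrix of a multivariate polynomial. -/
noncomputable def hessian {k : Type*} [Field k] {σ : Type*} (f : MvPolynomial σ k) :
    Matrix σ σ (MvPolynomial σ k) :=
  Matrix.of fun i j => pderiv i (pderiv j f)

/-- The center of a form `f`: scalar matrices `X` such that `H · X` is symmetric,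
where `H` is the Hessian matrix of `f`. -/
def center {k : Type*} [Field k] {σ : Type*} [Fintype σ] (f : MvPolynomial σ k) :
    Set (Matrix σ σ k) :=
  {X | (hessian f * X.map (C : k → MvPolynomial σ k))ᵀ
        = hessian f * X.map (C : k → MvPolynomial σ k)}

section Aux

variable {k : Type*} [Field k] {n : ℕ}

private lemma pderiv_pderiv_comm' {σ : Type*} (i j : σ) (p : MvPolynomial σ k) :
    pderiv i (pderiv j p) = pderiv j (pderiv i p) := by
  classical
  induction p using MvPolynomial.induction_on with
  | C a => simp
  | add p q hp hq => simp [hp, hq]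
  | mul_X p m hp =>
      simp only [pderiv_mul, map_add, hp, pderiv_X, Pi.single_apply, apply_ite,
        pderiv_one, map_zero, pderiv_C]
      split_ifs <;> ring_nf

/-- The Euler operator. -/
private noncomputable def eop (p : MvPolynomial (Fin n) k) : MvPolynomial (Fin n) k :=
  ∑ i, X i * pderiv i p

private lemma eop_monomial (s : Fin n →₀ ℕ) (a : k) :
    eop (monomial s a) = monomial s ((((∑ i, s i : ℕ)) : k) * a) := by
  unfold eop
  have key : ∀ i : Fin n, X i * pderiv i (monomial s a) = monomial s (((s i : ℕ) : k) * a) := by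
    intro i
    rw [pderiv_monomial, X, monomial_mul, one_mul]
    by_cases h : s i = 0
    · simp [h]
    · have hle : Finsupp.single i 1 ≤ s := by
        rw [Finsupp.single_le_iff]
        omega
      rw [add_tsub_cancel_of_le hle, mul_comm a]
  simp_rw [key]
  rw [← map_sum, Nat.cast_sum, Finset.sum_mul]

private lemma eop_sum {ι : Type*} (s : Finset ι) (p : ι → MvPolynomial (Fin n) k) :
    eop (∑ j ∈ s, p j) = ∑ j ∈ s, eop (p j) := by
  unfold eop
  simp_rw [map_sum, Finset.mul_sum]
  exact Finset.sum_comm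

private lemma eop_C_mul (a : k) (p : MvPolynomial (Fin n) k) : eop (C a * p) = C a * eop p := by
  unfold eop
  simp_rw [pderiv_C_mul, Finset.mul_sum]
  congr 1; ext i; ring

private lemma euler {d : ℕ} {f : MvPolynomial (Fin n) k} (hf : f.IsHomogeneous d) :
    eop f = C (d : k) * f := by
  conv_lhs => rw [← support_sum_monomial_coeff f]
  conv_rhs => rw [← support_sum_monomial_coeff f]
  rw [eop_sum, Finset.mul_sum]
  refine Finset.sum_congr rfl fun s hs => ?_
  rw [eop_monomial, C_mul_monomial]
  congr 2
  have hc := hf (MvPolynomial.mem_support_iff.mp hs)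
  rw [← hc, Finsupp.weight_apply, Finsupp.sum]
  rw [Finset.sum_subset (Finset.subset_univ s.support)
    (fun i _ hi => by simp [Finsupp.notMem_support_iff.mp hi])]
  simp

private lemma eop_pderiv {p : MvPolynomial (Fin n) k} {c : k} (h : eop p = C c * p) (j : Fin n) :
    eop (pderiv j p) = C (c - 1) * pderiv j p := by
  have hd : pderiv j (eop p) = pderiv j p + eop (pderiv j p) := by
    unfold eop
    rw [map_sum]
    simp_rw [pderiv_mul, Finset.sum_add_distrib]
    congr 1
    · classical
      rw [Finset.sum_eq_single j (fun i _ hij => by simp [pderiv_X, Pi.single_eq_of_ne hij])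
        (by simp)]
      simp
    · exact Finset.sum_congr rfl fun i _ => by rw [pderiv_pderiv_comm']
  rw [h, pderiv_C_mul] at hd
  rw [map_sub, sub_mul, MvPolynomial.C_1, one_mul]
  rw [hd]
  ring

private lemma eop_zero_of_pderiv {p : MvPolynomial (Fin n) k} (h : ∀ i, pderiv i p = 0) :
    eop p = 0 := by
  unfold eop; simp [h]

end Aux

/-- the center of a nondegenerate form of degree `d ≥ 3` (over a field of
characteristic `0` or `> d`) contains the identity, is closed under matrix multiplication,
and is commutative; hence it is a commutative unital subalgebra of the matrix algebra. -/
theorem center_mul_mem_and_comm {k : Type*} [Field k] {n d : ℕ} (hd : 3 ≤ d)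
    (hchar : ringChar k = 0 ∨ d < ringChar k)
    (f : MvPolynomial (Fin n) k) (hf : f.IsHomogeneous d)
    (hnd : LinearIndependent k fun i : Fin n => pderiv i f) :
    (1 : Matrix (Fin n) (Fin n) k) ∈ center f ∧
      ∀ X ∈ center f, ∀ Y ∈ center f, X * Y ∈ center f ∧ X * Y = Y * X := by
  classical
  have hcast : ∀ m : ℕ, 0 < m → m ≤ d → ((m : k) ≠ 0) := by
    intro m hm hmd h0
    have hdvd : ringChar k ∣ m := (ringChar.spec k m).mp h0
    rcases hchar with h | h
    · rw [h] at hdvd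
      have := zero_dvd_iff.mp hdvd
      omega
    · have := Nat.le_of_dvd hm hdvd
      omega
  have hH : (hessian f)ᵀ = hessian f := by
    refine Matrix.ext fun i j => ?_
    exact pderiv_pderiv_comm' j i f
  constructor
  · show (hessian f * (1 : Matrix (Fin n) (Fin n) k).map (C : k → MvPolynomial (Fin n) k))ᵀ = _
    rw [Matrix.map_one (C : k → MvPolynomial (Fin n) k) (map_zero C) (map_one C),
      mul_one, hH]
  intro X hX Y hY
  set H := hessian f with hHdef
  have key : ∀ Z : Matrix (Fin n) (Fin n) k, Z ∈ center f →
      (Z.map C)ᵀ * H = H * Z.map C := by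
    intro Z hZ
    have h1 : (H * Z.map C)ᵀ = H * Z.map C := hZ
    calc (Z.map C)ᵀ * H = (Z.map C)ᵀ * Hᵀ := by rw [hH]
      _ = (H * Z.map C)ᵀ := (Matrix.transpose_mul _ _).symm
      _ = H * Z.map C := h1
  have hXk := key X hX
  have hYk := key Y hY
  have hsymm : (H * (X.map C * Y.map C))ᵀ = H * (Y.map C * X.map C) := by
    calc (H * (X.map C * Y.map C))ᵀ
        = ((X.map C)ᵀ * ((Y.map C)ᵀ * H))ᵀ := by
          rw [← mul_assoc, ← hXk, mul_assoc, ← hYk, ← mul_assoc, mul_assoc]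
      _ = ((Y.map C)ᵀ * H)ᵀ * X.map C := by
          rw [Matrix.transpose_mul, Matrix.transpose_transpose]
      _ = Hᵀ * Y.map C * X.map C := by
          rw [Matrix.transpose_mul, Matrix.transpose_transpose]
      _ = H * (Y.map C * X.map C) := by rw [hH, mul_assoc]
  have hsymm' : (H * (Y.map C * X.map C))ᵀ = H * (X.map C * Y.map C) := by
    calc (H * (Y.map C * X.map C))ᵀ
        = ((Y.map C)ᵀ * ((X.map C)ᵀ * H))ᵀ := by
          rw [← mul_assoc, ← hYk, mul_assoc, ← hXk, ← mul_assoc, mul_assoc]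
      _ = ((X.map C)ᵀ * H)ᵀ * Y.map C := by
          rw [Matrix.transpose_mul, Matrix.transpose_transpose]
      _ = Hᵀ * X.map C * Y.map C := by
          rw [Matrix.transpose_mul, Matrix.transpose_transpose]
      _ = H * (X.map C * Y.map C) := by rw [hH, mul_assoc]
  set M : Matrix (Fin n) (Fin n) k := X * Y - Y * X with hMdef
  set A : Matrix (Fin n) (Fin n) (MvPolynomial (Fin n) k) := H * M.map C with hAdef
  have hmapM : M.map (C : k → MvPolynomial (Fin n) k) = X.map C * Y.map C - Y.map C * X.map C := by
    refine Matrix.ext fun i j => ?_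
    simp [hMdef, Matrix.map_apply, Matrix.sub_apply, Matrix.mul_apply, map_sum]
  have hAanti : Aᵀ = -A := by
    rw [hAdef, hmapM, mul_sub, Matrix.transpose_sub, hsymm, hsymm']
    abel
  set h : Fin n → MvPolynomial (Fin n) k := fun l => ∑ j, C (M j l) * pderiv j f with hhdef
  have hAh : ∀ i l, A i l = pderiv i (h l) := by
    intro i l
    rw [hhdef]
    simp only [map_sum, pderiv_C_mul]
    rw [hAdef, Matrix.mul_apply]
    refine Finset.sum_congr rfl fun j _ => ?_
    simp [hHdef, hessian, Matrix.map_apply, mul_comm]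
  have hanti : ∀ i l, pderiv i (h l) = - pderiv l (h i) := by
    intro i l
    have h2 : A l i = - A i l := by
      rw [← Matrix.transpose_apply A i l, hAanti, Matrix.neg_apply]
    rw [← hAh, ← hAh, h2, neg_neg]
  -- all second derivatives of the h's vanish
  have hT : ∀ a i l, pderiv a (pderiv i (h l)) = 0 := by
    have step : ∀ a i l, pderiv a (pderiv i (h l)) = - pderiv a (pderiv l (h i)) := by
      intro a i l; rw [hanti i l, map_neg]
    have comm : ∀ a i l, pderiv a (pderiv i (h l)) = pderiv i (pderiv a (h l)) :=
      fun a i l => pderiv_pderiv_comm' a i (h l)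
    intro a i l
    have hneg : pderiv a (pderiv i (h l)) = - pderiv a (pderiv i (h l)) := by
      calc pderiv a (pderiv i (h l))
          = pderiv i (pderiv a (h l)) := comm a i l
        _ = - pderiv i (pderiv l (h a)) := step i a l
        _ = - pderiv l (pderiv i (h a)) := by rw [comm i l a]
        _ = pderiv l (pderiv a (h i)) := by rw [step l i a, neg_neg]
        _ = pderiv a (pderiv l (h i)) := pderiv_pderiv_comm' l a (h i)
        _ = - pderiv a (pderiv i (h l)) := by rw [step a l i]
    have h20 : (2 : MvPolynomial (Fin n) k) * pderiv a (pderiv i (h l)) = 0 := by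
      linear_combination hneg
    have h2ne : (2 : MvPolynomial (Fin n) k) ≠ 0 := by
      have h2k : (2 : k) ≠ 0 := by
        have := hcast 2 (by norm_num) (by omega)
        exact_mod_cast this
      intro hcon
      have hC : (C (2 : k) : MvPolynomial (Fin n) k) = 0 := by
        rw [map_ofNat]; exact hcon
      exact h2k (MvPolynomial.C_eq_zero.mp hC)
    exact (mul_eq_zero.mp h20).resolve_left h2ne
  have euf := euler hf
  have euh : ∀ l, eop (h l) = C ((d : k) - 1) * h l := by
    intro l
    rw [hhdef, eop_sum, Finset.mul_sum]
    refine Finset.sum_congr rfl fun j _ => ?_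
    rw [eop_C_mul, eop_pderiv euf j]
    ring
  have hdh0 : ∀ i l, pderiv i (h l) = 0 := by
    intro i l
    have e2 := eop_pderiv (euh l) i
    rw [eop_zero_of_pderiv (fun a => hT a i l)] at e2
    have hc2 : ((d : k) - 1 - 1) ≠ 0 := by
      have hcst : ((d - 2 : ℕ) : k) = (d : k) - 1 - 1 := by
        rw [Nat.cast_sub (by omega)]
        push_cast
        ring
      rw [← hcst]
      exact hcast _ (by omega) (by omega)
    have hCne : (C ((d : k) - 1 - 1) : MvPolynomial (Fin n) k) ≠ 0 :=
      fun hcon => hc2 (MvPolynomial.C_eq_zero.mp hcon)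
    exact (mul_eq_zero.mp e2.symm).resolve_left hCne
  have hh0 : ∀ l, h l = 0 := by
    intro l
    have e1 := euh l
    rw [eop_zero_of_pderiv (fun i => hdh0 i l)] at e1
    have hc1 : ((d : k) - 1) ≠ 0 := by
      have hcst : ((d - 1 : ℕ) : k) = (d : k) - 1 := by
        rw [Nat.cast_sub (by omega)]
        push_cast
        ring
      rw [← hcst]
      exact hcast _ (by omega) (by omega)
    have hCne : (C ((d : k) - 1) : MvPolynomial (Fin n) k) ≠ 0 :=
      fun hcon => hc1 (MvPolynomial.C_eq_zero.mp hcon)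
    exact (mul_eq_zero.mp e1.symm).resolve_left hCne
  have hM0 : M = 0 := by
    refine Matrix.ext fun j l => ?_
    have hl := hh0 l
    rw [hhdef] at hl
    have hsm : ∑ j, M j l • pderiv j f = 0 := by
      simpa [smul_eq_C_mul] using hl
    have := Fintype.linearIndependent_iff.mp hnd (fun j => M j l) hsm j
    simpa using this
  have hcomm : X * Y = Y * X := by
    have hsub : X * Y - Y * X = 0 := by rw [← hMdef]; exact hM0
    exact sub_eq_zero.mp hsub
  refine ⟨?_, hcomm⟩
  show (H * (X * Y).map (C : k → MvPolynomial (Fin n) k))ᵀ = H * (X * Y).map (C : k → MvPolynomial (Fin n) k)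
  have hmapXY : (X * Y).map (C : k → MvPolynomial (Fin n) k) = X.map C * Y.map C := by
    refine Matrix.ext fun i j => ?_
    simp [Matrix.map_apply, Matrix.mul_apply, map_sum]
  have hmapYX : (Y * X).map (C : k → MvPolynomial (Fin n) k) = Y.map C * X.map C := by
    refine Matrix.ext fun i j => ?_
    simp [Matrix.map_apply, Matrix.mul_apply, map_sum]
  rw [hmapXY, hsymm, ← hmapYX, ← hcomm, hmapXY]
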